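/- Suppose t, s ∈ ℝ satisfy A(t,s) > 4 r e^{s+t}. If r ≤ a cos β then (∂²φ/∂s∂t)(t,s) > 0; in particular ∂²φ/∂s∂t has no zeros. If r > a cos β, then (∂²φ/∂s∂t)(t,s) = 0 if and only if (e^{2t} − X₀)(e^{2s} − Y₀) = B. -/

import Mathlib

open Real

noncomputable section

/-- Inverse hyperbolic cosine. -/
def arcosh (x : ℝ) : ℝ := Real.log (x + Real.sqrt (x ^ 2 - 1))

/-- `d₁ = √(a² + r² − 2ar cos β)`. -/
def d1 (a r β : ℝ) : ℝ := Real.sqrt (a ^ 2 + r ^ 2 - 2 * a * r * Real.cos β)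

/-- `d₂ = √(a² + r² + 2ar cos β)`. -/
def d2 (a r β : ℝ) : ℝ := Real.sqrt (a ^ 2 + r ^ 2 + 2 * a * r * Real.cos β)

/-- `A(t,s) = e^{2s+2t} + e^{2t} + d₁² e^{2s} + d₂²`. -/
def Afun (a r β t s : ℝ) : ℝ :=
  Real.exp (2 * s + 2 * t) + Real.exp (2 * t) + d1 a r β ^ 2 * Real.exp (2 * s) +
    d2 a r β ^ 2

/-- `φ(t,s) = arcosh(A(t,s)/(4 r e^{s+t}))`, the lifted distance function. -/
def phi (a r β t s : ℝ) : ℝ := _root_.arcosh (Afun a r β t s / (4 * r * Real.exp (s + t)))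

/-- `Y₀ = (r + a cos β)/(r − a cos β)`. -/
def Y0 (a r β : ℝ) : ℝ := (r + a * Real.cos β) / (r - a * Real.cos β)

/-- `X₀ = d₁² Y₀`. -/
def X0 (a r β : ℝ) : ℝ := d1 a r β ^ 2 * Y0 a r β

/-- `B = 4a³ r cos β sin²β/(r − a cos β)²`. -/
def Bq (a r β : ℝ) : ℝ :=
  4 * a ^ 3 * r * Real.cos β * Real.sin β ^ 2 / (r - a * Real.cos β) ^ 2

lemma arcosh_hasDerivAt {x : ℝ} (hx : 1 < x) :
    HasDerivAt _root_.arcosh (1 / Real.sqrt (x ^ 2 - 1)) x := by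
  have h1 : (0:ℝ) < x ^ 2 - 1 := by nlinarith
  have hq : 0 < Real.sqrt (x ^ 2 - 1) := Real.sqrt_pos.2 h1
  have hsq : Real.sqrt (x ^ 2 - 1) ^ 2 = x ^ 2 - 1 := Real.sq_sqrt h1.le
  have h2 : HasDerivAt (fun y : ℝ => y ^ 2 - 1) (2 * x) x := by
    simpa using ((hasDerivAt_pow 2 x).sub_const 1)
  have h3 : HasDerivAt (fun y : ℝ => Real.sqrt (y ^ 2 - 1))
      (1 / (2 * Real.sqrt (x ^ 2 - 1)) * (2 * x)) x :=
    (Real.hasDerivAt_sqrt h1.ne').comp x h2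
  have h4 : HasDerivAt (fun y : ℝ => y + Real.sqrt (y ^ 2 - 1))
      (1 + 1 / (2 * Real.sqrt (x ^ 2 - 1)) * (2 * x)) x := (hasDerivAt_id x).add h3
  have h5 : 0 < x + Real.sqrt (x ^ 2 - 1) := by positivity
  have h6 := h4.log h5.ne'
  have heq : (1 + 1 / (2 * Real.sqrt (x ^ 2 - 1)) * (2 * x)) / (x + Real.sqrt (x ^ 2 - 1))
      = 1 / Real.sqrt (x ^ 2 - 1) := by
    field_simp
    nlinarith [hsq]
  rw [heq] at h6
  exact h6

/-- numerator of φ_t -/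
def Nf (a r β t s : ℝ) : ℝ :=
  Real.exp (2 * s + 2 * t) + Real.exp (2 * t) - d1 a r β ^ 2 * Real.exp (2 * s) -
    d2 a r β ^ 2
/-- the quantity A² − 16r² e^{2s+2t} -/
def Df (a r β t s : ℝ) : ℝ :=
  Afun a r β t s ^ 2 - 16 * r ^ 2 * Real.exp (2 * s + 2 * t)

lemma exp_sq (u : ℝ) : Real.exp u ^ 2 = Real.exp (2 * u) := by
  rw [sq, ← Real.exp_add]; ring_nf

lemma Df_pos {a r β t s : ℝ} (hr : 0 < r)
    (h : 4 * r * Real.exp (s + t) < Afun a r β t s) : 0 < Df a r β t s := by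
  have hE : 0 < 4 * r * Real.exp (s + t) := by positivity
  have h2 : (4 * r * Real.exp (s + t)) ^ 2 = 16 * r ^ 2 * Real.exp (2 * s + 2 * t) := by
    rw [show (2 * s + 2 * t) = 2 * (s + t) by ring, ← exp_sq]; ring
  have : (4 * r * Real.exp (s + t)) ^ 2 < Afun a r β t s ^ 2 := by nlinarith
  unfold Df; linarith [h2 ▸ this]

lemma inner_hasDerivAt {a r β t s : ℝ} (hr : 0 < r)
    (h : 4 * r * Real.exp (s + t) < Afun a r β t s) :
    HasDerivAt (fun t' => phi a r β t' s)
      (Nf a r β t s / Real.sqrt (Df a r β t s)) t := by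
  set E : ℝ := 4 * r * Real.exp (s + t) with hEdef
  have hE0 : 0 < E := by positivity
  have hu : 1 < Afun a r β t s / E := (one_lt_div hE0).2 h
  -- derivative of A in t'
  have hlin : HasDerivAt (fun t' : ℝ => 2 * s + 2 * t') 2 t := by
    simpa using ((hasDerivAt_id t).const_mul 2).const_add (2 * s)
  have he1 : HasDerivAt (fun t' : ℝ => Real.exp (2 * s + 2 * t'))
      (2 * Real.exp (2 * s + 2 * t)) t := by
    simpa [Function.comp_def, mul_comm] using (Real.hasDerivAt_exp (2 * s + 2 * t)).comp t hlin
  have hlin2 : HasDerivAt (fun t' : ℝ => 2 * t') 2 t := by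
    simpa using ((hasDerivAt_id t).const_mul 2)
  have he2 : HasDerivAt (fun t' : ℝ => Real.exp (2 * t')) (2 * Real.exp (2 * t)) t := by
    simpa [Function.comp_def, mul_comm] using (Real.hasDerivAt_exp (2 * t)).comp t hlin2
  have hAt : HasDerivAt (fun t' => Afun a r β t' s)
      (2 * Real.exp (2 * s + 2 * t) + 2 * Real.exp (2 * t)) t := by
    unfold Afun
    exact ((he1.add he2).add_const _).add_const _
  have hlin3 : HasDerivAt (fun t' : ℝ => s + t') 1 t := by
    simpa using (hasDerivAt_id t).const_add s
  have he3 : HasDerivAt (fun t' : ℝ => Real.exp (s + t')) (Real.exp (s + t)) t := by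
    simpa [Function.comp_def] using (Real.hasDerivAt_exp (s + t)).comp t hlin3
  have hEt : HasDerivAt (fun t' : ℝ => 4 * r * Real.exp (s + t')) E t := by
    simpa [hEdef, mul_assoc] using he3.const_mul (4 * r)
  have hut : HasDerivAt (fun t' => Afun a r β t' s / (4 * r * Real.exp (s + t')))
      (((2 * Real.exp (2 * s + 2 * t) + 2 * Real.exp (2 * t)) * E -
        Afun a r β t s * E) / E ^ 2) t := hAt.div hEt hE0.ne'
  have harc := (arcosh_hasDerivAt hu).comp t hut
  have hphi : (fun t' => phi a r β t' s) =
      (fun t' => _root_.arcosh (Afun a r β t' s / (4 * r * Real.exp (s + t')))) := rfl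
  rw [hphi]
  refine harc.congr_deriv ?_
  -- value equality
  have hDpos : 0 < Df a r β t s := Df_pos hr h
  have hE2 : E ^ 2 = 16 * r ^ 2 * Real.exp (2 * s + 2 * t) := by
    rw [hEdef, show (2 * s + 2 * t) = 2 * (s + t) by ring, ← exp_sq]; ring
  have hq : (Afun a r β t s / E) ^ 2 - 1 = Df a r β t s / E ^ 2 := by
    field_simp
    unfold Df; rw [hE2]
  have hsqrt : Real.sqrt ((Afun a r β t s / E) ^ 2 - 1)
      = Real.sqrt (Df a r β t s) / E := by
    rw [hq, Real.sqrt_div hDpos.le, Real.sqrt_sq hE0.le]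
  rw [hsqrt]
  have hsD : 0 < Real.sqrt (Df a r β t s) := Real.sqrt_pos.2 hDpos
  have hN : Nf a r β t s = (2 * Real.exp (2 * s + 2 * t) + 2 * Real.exp (2 * t))
      - Afun a r β t s := by unfold Nf Afun; ring
  rw [hN]
  field_simp
def Gv (a r β t s : ℝ) : ℝ :=
  2 * (2 * Real.exp (2 * s + 2 * t) - 2 * d1 a r β ^ 2 * Real.exp (2 * s)) * Df a r β t s -
    Nf a r β t s * (2 * Afun a r β t s *
      (2 * Real.exp (2 * s + 2 * t) + 2 * d1 a r β ^ 2 * Real.exp (2 * s)) -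
        32 * r ^ 2 * Real.exp (2 * s + 2 * t))

lemma outer_deriv {a r β t s : ℝ} (hr : 0 < r)
    (h : 4 * r * Real.exp (s + t) < Afun a r β t s) :
    deriv (fun s' => deriv (fun t' => phi a r β t' s') t) s
      = Gv a r β t s / (2 * Df a r β t s * Real.sqrt (Df a r β t s)) := by
  have hev : ∀ᶠ s' in nhds s, 4 * r * Real.exp (s' + t) < Afun a r β t s' := by
    have hopen : IsOpen {s' : ℝ | 4 * r * Real.exp (s' + t) < Afun a r β t s'} :=
      isOpen_lt (by fun_prop) (by unfold Afun; fun_prop)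
    exact hopen.mem_nhds h
  have heq : (fun s' => deriv (fun t' => phi a r β t' s') t) =ᶠ[nhds s]
      (fun s' => Nf a r β t s' / Real.sqrt (Df a r β t s')) :=
    hev.mono fun s' hs' => (inner_hasDerivAt hr hs').deriv
  rw [heq.deriv_eq]
  have hDpos : 0 < Df a r β t s := Df_pos hr h
  set q : ℝ := Real.sqrt (Df a r β t s) with hqdef
  have hq0 : 0 < q := Real.sqrt_pos.2 hDpos
  have hq2 : q ^ 2 = Df a r β t s := Real.sq_sqrt hDpos.le
  -- derivatives in s'
  have hl1 : HasDerivAt (fun s' : ℝ => 2 * s' + 2 * t) 2 s := by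
    simpa using ((hasDerivAt_id s).const_mul 2).add_const (2 * t)
  have he1 : HasDerivAt (fun s' : ℝ => Real.exp (2 * s' + 2 * t))
      (2 * Real.exp (2 * s + 2 * t)) s := by
    simpa [Function.comp_def, mul_comm] using (Real.hasDerivAt_exp (2 * s + 2 * t)).comp s hl1
  have hl2 : HasDerivAt (fun s' : ℝ => 2 * s') 2 s := by
    simpa using ((hasDerivAt_id s).const_mul 2)
  have he2 : HasDerivAt (fun s' : ℝ => Real.exp (2 * s')) (2 * Real.exp (2 * s)) s := by
    simpa [Function.comp_def, mul_comm] using (Real.hasDerivAt_exp (2 * s)).comp s hl2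
  have hN : HasDerivAt (fun s' => Nf a r β t s')
      (2 * Real.exp (2 * s + 2 * t) - 2 * d1 a r β ^ 2 * Real.exp (2 * s)) s := by
    unfold Nf
    have := ((he1.add_const (Real.exp (2 * t))).sub
      (he2.const_mul (d1 a r β ^ 2))).sub_const (d2 a r β ^ 2)
    refine this.congr_deriv ?_
    ring
  have hA : HasDerivAt (fun s' => Afun a r β t s')
      (2 * Real.exp (2 * s + 2 * t) + 2 * d1 a r β ^ 2 * Real.exp (2 * s)) s := by
    unfold Afun
    have := (((he1.add_const (Real.exp (2 * t))).add
      (he2.const_mul (d1 a r β ^ 2)))).add_const (d2 a r β ^ 2)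
    refine this.congr_deriv ?_
    ring
  have hD : HasDerivAt (fun s' => Df a r β t s')
      (2 * Afun a r β t s *
        (2 * Real.exp (2 * s + 2 * t) + 2 * d1 a r β ^ 2 * Real.exp (2 * s)) -
        32 * r ^ 2 * Real.exp (2 * s + 2 * t)) s := by
    unfold Df
    have := (hA.pow 2).sub (he1.const_mul (16 * r ^ 2))
    refine this.congr_deriv ?_
    ring
  have hs : HasDerivAt (fun s' => Real.sqrt (Df a r β t s'))
      ((2 * Afun a r β t s *
        (2 * Real.exp (2 * s + 2 * t) + 2 * d1 a r β ^ 2 * Real.exp (2 * s)) -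
        32 * r ^ 2 * Real.exp (2 * s + 2 * t)) / (2 * q)) s := by
    have := (Real.hasDerivAt_sqrt hDpos.ne').comp s hD
    refine this.congr_deriv ?_
    rw [hqdef]; ring
  have hg := hN.div hs hq0.ne'
  rw [HasDerivAt.deriv (f := fun s' => Nf a r β t s' / Real.sqrt (Df a r β t s')) hg]
  unfold Gv
  rw [← hq2]
  field_simp
  rw [Real.sqrt_sq hq0.le]
  ring


lemma Hpos {a r c X Y : ℝ} (ha : 0 ≤ a) (hr : 0 < r) (hc1 : c < 1)
    (hX : 0 < X) (hY : 0 < Y) (hle : r ≤ a * c) :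
    0 < r * (r + a * c) * X + r * (a * c - r) * (X * Y) +
      (r ^ 4 - a * r ^ 3 * c + a ^ 2 * r ^ 2 - 2 * a ^ 2 * r ^ 2 * c ^ 2 + a ^ 3 * r * c) * Y +
      (-r ^ 4 - a * r ^ 3 * c - a ^ 2 * r ^ 2 + 2 * a ^ 2 * r ^ 2 * c ^ 2 + a ^ 3 * r * c) := by
  have haca : a * c ≤ a := by nlinarith
  have hra : r ≤ a := le_trans hle haca
  have k1 : 0 ≤ a * c - r := by linarith
  have k2 : 0 ≤ a ^ 2 - r ^ 2 := by nlinarith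
  have k3 : 0 ≤ a ^ 2 * c ^ 2 - r ^ 2 := by nlinarith
  have k4 : 0 ≤ 1 - c ^ 2 := by nlinarith
  nlinarith [mul_pos (mul_pos hr (show 0 < r + a * c by linarith)) hX,
    mul_nonneg (mul_nonneg hr.le k1) (mul_pos hX hY).le,
    mul_nonneg (mul_nonneg hr.le (mul_nonneg k1 k2)) hY.le,
    mul_nonneg (mul_nonneg (mul_nonneg (by positivity : (0:ℝ) ≤ 2 * a ^ 2 * r) k4) hr.le) hY.le,
    mul_nonneg hr.le (mul_nonneg k1 k2),
    mul_nonneg hr.le (mul_nonneg (by positivity : (0:ℝ) ≤ 2 * r) k3)]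


set_option maxHeartbeats 1000000 in
/-- Description of the zero set of `φ''_st`: it is empty when `r ≤ a cos β`, and it is
the curve `(e^{2t} − X₀)(e^{2s} − Y₀) = B` when `r > a cos β`. -/
theorem zero_set_of_mixed_derivative (a r β t s : ℝ) (ha : 0 ≤ a) (hr : 0 < r)
    (hβ : β ∈ Set.Ioc 0 (π / 2))
    (h : 4 * r * Real.exp (s + t) < Afun a r β t s) :
    (r ≤ a * Real.cos β →
      0 < deriv (fun s' => deriv (fun t' => phi a r β t' s') t) s) ∧
    (a * Real.cos β < r →
      (deriv (fun s' => deriv (fun t' => phi a r β t' s') t) s = 0 ↔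
        (Real.exp (2 * t) - X0 a r β) * (Real.exp (2 * s) - Y0 a r β) = Bq a r β)) := by
  obtain ⟨hβ0, hβ2⟩ := hβ
  have hpi : (0:ℝ) < π := Real.pi_pos
  have hc0 : 0 ≤ Real.cos β :=
    Real.cos_nonneg_of_mem_Icc ⟨by linarith, hβ2⟩
  have hc1 : Real.cos β < 1 := by
    have := Real.cos_lt_cos_of_nonneg_of_le_pi (le_refl 0) (by linarith) hβ0
    simpa using this
  have hsin : 0 < Real.sin β := Real.sin_pos_of_pos_of_lt_pi hβ0 (by linarith)
  have hd1sq : d1 a r β ^ 2 = a ^ 2 + r ^ 2 - 2 * a * r * Real.cos β := by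
    apply Real.sq_sqrt
    nlinarith [sq_nonneg (a - r), mul_nonneg (mul_nonneg ha hr.le) (sub_nonneg.2 hc1.le)]
  have hd2sq : d2 a r β ^ 2 = a ^ 2 + r ^ 2 + 2 * a * r * Real.cos β := by
    apply Real.sq_sqrt
    nlinarith [mul_nonneg (mul_nonneg ha hr.le) hc0]
  have hX : 0 < Real.exp (2 * t) := Real.exp_pos _
  have hY : 0 < Real.exp (2 * s) := Real.exp_pos _
  have hXY : Real.exp (2 * s + 2 * t) = Real.exp (2 * s) * Real.exp (2 * t) :=
    Real.exp_add _ _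
  have hDpos : 0 < Df a r β t s := Df_pos hr h
  have hden : 0 < 2 * Df a r β t s * Real.sqrt (Df a r β t s) := by positivity
  have hG : Gv a r β t s = 32 * Real.exp (2 * t) * Real.exp (2 * s) *
      (r * (r + a * Real.cos β) * Real.exp (2 * t) +
       r * (a * Real.cos β - r) * (Real.exp (2 * t) * Real.exp (2 * s)) +
       (r ^ 4 - a * r ^ 3 * Real.cos β + a ^ 2 * r ^ 2 -
         2 * a ^ 2 * r ^ 2 * Real.cos β ^ 2 + a ^ 3 * r * Real.cos β) * Real.exp (2 * s) +
       (-r ^ 4 - a * r ^ 3 * Real.cos β - a ^ 2 * r ^ 2 +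
         2 * a ^ 2 * r ^ 2 * Real.cos β ^ 2 + a ^ 3 * r * Real.cos β)) := by
    unfold Gv Nf Df Afun
    rw [hd1sq, hd2sq, hXY]
    ring
  rw [outer_deriv hr h]
  constructor
  · -- r ≤ a cos β : positivity
    intro hle
    apply div_pos _ hden
    rw [hG]
    have hH := Hpos (a := a) (r := r) (c := Real.cos β) ha hr hc1 hX hY hle
    have := mul_pos (mul_pos (mul_pos (by norm_num : (0:ℝ) < 32) hX) hY) hH
    linarith
  · -- a cos β < r : zero-set description
    intro hlt
    have hm : 0 < r - a * Real.cos β := by linarith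
    have h1 : Gv a r β t s / (2 * Df a r β t s * Real.sqrt (Df a r β t s)) = 0 ↔
        Gv a r β t s = 0 := by
      rw [div_eq_zero_iff]
      simp [hden.ne']
    rw [h1, hG]
    have h2 : (32 : ℝ) * Real.exp (2 * t) * Real.exp (2 * s) ≠ 0 := by positivity
    rw [mul_eq_zero]
    simp only [h2, false_or]
    -- now: HH = 0 ↔ (X - X0)(Y - Y0) = Bq
    have key : (Real.exp (2 * t) - X0 a r β) * (Real.exp (2 * s) - Y0 a r β) - Bq a r β =
        -(r * (r + a * Real.cos β) * Real.exp (2 * t) +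
       r * (a * Real.cos β - r) * (Real.exp (2 * t) * Real.exp (2 * s)) +
       (r ^ 4 - a * r ^ 3 * Real.cos β + a ^ 2 * r ^ 2 -
         2 * a ^ 2 * r ^ 2 * Real.cos β ^ 2 + a ^ 3 * r * Real.cos β) * Real.exp (2 * s) +
       (-r ^ 4 - a * r ^ 3 * Real.cos β - a ^ 2 * r ^ 2 +
         2 * a ^ 2 * r ^ 2 * Real.cos β ^ 2 + a ^ 3 * r * Real.cos β)) /
        (r * (r - a * Real.cos β)) := by
      unfold X0 Y0 Bq
      rw [hd1sq, Real.sin_sq]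
      field_simp
      ring
    constructor
    · intro h0
      have : (Real.exp (2 * t) - X0 a r β) * (Real.exp (2 * s) - Y0 a r β) - Bq a r β = 0 := by
        rw [key, h0]
        simp
      linarith [this]
    · intro h0
      have h3 : (Real.exp (2 * t) - X0 a r β) * (Real.exp (2 * s) - Y0 a r β) - Bq a r β = 0 :=
        sub_eq_zero.2 h0
      rw [key] at h3
      have h4 : r * (r - a * Real.cos β) ≠ 0 := by positivity
      have h5 := (div_eq_zero_iff.1 h3).resolve_right h4
      linarith [neg_eq_zero.1 h5]


end
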